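/- Let P ∈ ℍ[X] be a nonzero quaternionic polynomial (right coefficients, evaluation P(x) = Σ x^k a_k). If x, y ∈ ℍ \ ℝ are two distinct left roots of P lying on the same conjugacy sphere (i.e., Re(x) = Re(y) and |Im(x)| = |Im(y)|), then every point of that sphere is a left root of P: P(z) = 0 for all z with Re(z) = Re(x) and |Im(z)| = |Im(x)|. -/

import Mathlib

/-- Coefficient pair recursion. -/
def cb (r n : ℝ) : ℕ → ℝ × ℝ
  | 0 => (1, 0)
  | k + 1 => (-n * (cb r n k).2, (cb r n k).1 + 2 * r * (cb r n k).2)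

lemma pow_eq_cb (z : Quaternion ℝ) (r n : ℝ)
    (h : z * z = (2 * r) • z - n • (1 : Quaternion ℝ)) :
    ∀ k, z ^ k = (cb r n k).1 • (1 : Quaternion ℝ) + (cb r n k).2 • z := by
  intro k
  induction k with
  | zero => simp [cb]
  | succ k ih =>
      rw [pow_succ, ih, add_mul, smul_mul_assoc, smul_mul_assoc, one_mul, h, cb]
      simp only [smul_sub, smul_smul]
      ring_nf
      module

lemma quad_id (z : Quaternion ℝ) :
    z * z = (2 * z.re) • z - (Quaternion.normSq z) • (1 : Quaternion ℝ) := by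
  ext <;> simp [Quaternion.re_mul, Quaternion.imI_mul, Quaternion.imJ_mul,
    Quaternion.imK_mul, Quaternion.normSq_def', Quaternion.re_one, Quaternion.imI_one,
    Quaternion.imJ_one, Quaternion.imK_one] <;> ring

lemma normSq_eq (z : Quaternion ℝ) :
    Quaternion.normSq z = z.re ^ 2 + ‖z.im‖ ^ 2 := by
  have : ‖z.im‖ ^ 2 = Quaternion.normSq z.im := by
    rw [sq, ← Quaternion.normSq_eq_norm_mul_self]
  rw [this]
  simp [Quaternion.normSq_def']
  ring

/-- **Zeros of quaternionic polynomials on conjugacy spheres.**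
If a nonzero quaternionic polynomial `P(x) = Σ_{k=0}^d x^k a_k` has two distinct
non-real left roots `x, y` on the same conjugacy sphere (`Re x = Re y`,
`‖Im x‖ = ‖Im y‖`), then every point of that sphere is a left root of `P`. -/
theorem spherical_zeros (d : ℕ) (a : ℕ → Quaternion ℝ)
    (hP : ∃ k ∈ Finset.range (d + 1), a k ≠ 0)
    (x y : Quaternion ℝ) (hxr : x.im ≠ 0) (hyr : y.im ≠ 0) (hxy : x ≠ y)
    (hre : x.re = y.re) (him : ‖x.im‖ = ‖y.im‖)
    (hx : (∑ k ∈ Finset.range (d + 1), x ^ k * a k) = 0)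
    (hy : (∑ k ∈ Finset.range (d + 1), y ^ k * a k) = 0) :
    ∀ z : Quaternion ℝ, z.re = x.re → ‖z.im‖ = ‖x.im‖ →
      (∑ k ∈ Finset.range (d + 1), z ^ k * a k) = 0 := by
  intro z hzre hzim
  obtain ⟨r, n, hr, hn⟩ : ∃ r n : ℝ, r = x.re ∧ n = Quaternion.normSq x :=
    ⟨_, _, rfl, rfl⟩
  have hny : Quaternion.normSq y = n := by
    rw [hn, normSq_eq, normSq_eq, hre, him]
  have hnz : Quaternion.normSq z = n := by
    rw [hn, normSq_eq, normSq_eq, hzre, hzim]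
  have hqx : x * x = (2 * r) • x - n • (1 : Quaternion ℝ) := by
    rw [hr, hn]; exact quad_id x
  have hqy : y * y = (2 * r) • y - n • (1 : Quaternion ℝ) := by
    have h := quad_id y
    rw [← hre, ← hr, hny] at h; exact h
  have hqz : z * z = (2 * r) • z - n • (1 : Quaternion ℝ) := by
    have h := quad_id z
    rw [hzre, ← hr, hnz] at h; exact h
  -- decompose sums
  have key : ∀ (w : Quaternion ℝ), w * w = (2 * r) • w - n • (1 : Quaternion ℝ) →
      (∑ k ∈ Finset.range (d + 1), w ^ k * a k)
      = (∑ k ∈ Finset.range (d + 1), (cb r n k).1 • a k)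
        + w * (∑ k ∈ Finset.range (d + 1), (cb r n k).2 • a k) := by
    intro w hw
    rw [Finset.mul_sum, ← Finset.sum_add_distrib]
    refine Finset.sum_congr rfl fun k _ => ?_
    rw [pow_eq_cb w r n hw k, add_mul, smul_mul_assoc, one_mul, smul_mul_assoc,
      mul_smul_comm]
  set S := ∑ k ∈ Finset.range (d + 1), (cb r n k).1 • a k with hS
  set T := ∑ k ∈ Finset.range (d + 1), (cb r n k).2 • a k with hT
  have ex : S + x * T = 0 := by rw [← key x hqx]; exact hx
  have ey : S + y * T = 0 := by rw [← key y hqy]; exact hy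
  have hTz : (x - y) * T = 0 := by
    have h := add_left_cancel (ex.trans ey.symm)
    rw [sub_mul, h, sub_self]
  have hT0 : T = 0 := by
    rcases mul_eq_zero.mp hTz with h | h
    · exact absurd (sub_eq_zero.mp h) hxy
    · exact h
  have hS0 : S = 0 := by simpa [hT0] using ex
  rw [key z hqz, hS0, hT0, mul_zero, add_zero]
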